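/- If A is unambiguous with a single final state q_F, then the multiset of paths enumerated by getAllPaths at node (v', q_F) (after BFS with predecessor lists on G× from (v,q₀)) is exactly the set of shortest paths from v to v' in G among paths with label in L(A), each occurring once. -/

import Mathlib

/-- A graph database: edges with source, target, and label. -/
structure GraphDB (V E S : Type) where
  src : E → V
  tgt : E → V
  lab : E → S

/-- An NFA with transition relation `δ ⊆ Q × Σ × Q`, initial state `q0`, final states `F`. -/
structure NFAx (Q S : Type) where
  δ : Set (Q × S × Q)
  q0 : Q
  F : Set Q

/-- `A.Run q w q'`: the automaton can read word `w` going from state `q` to state `q'`. -/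
inductive NFAx.Run {Q S : Type} (A : NFAx Q S) : Q → List S → Q → Prop
  | nil (q : Q) : A.Run q [] q
  | cons {q q' q'' : Q} {a : S} {w : List S} :
      (q, a, q') ∈ A.δ → A.Run q' w q'' → A.Run q (a :: w) q''

/-- The language accepted by the NFA. -/
def NFAx.Lang {Q S : Type} (A : NFAx Q S) : Set (List S) :=
  {w | ∃ qf ∈ A.F, A.Run A.q0 w qf}

/-- `G.IsWalk v es w`: the edge list `es` forms a walk from `v` to `w` in `G`. -/
def GraphDB.IsWalk {V E S : Type} (G : GraphDB V E S) : V → List E → V → Prop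
  | v, [], w => v = w
  | v, e :: es, w => G.src e = v ∧ G.IsWalk (G.tgt e) es w

/-- Distance (minimum number of edges over all walks), `⊤` if unreachable. -/
noncomputable def GraphDB.dist {V E S : Type} (G : GraphDB V E S) (v w : V) : ℕ∞ :=
  sInf {n : ℕ∞ | ∃ es : List E, G.IsWalk v es w ∧ (es.length : ℕ∞) = n}

/-- Edges of the product graph: pairs of a `G`-edge and a compatible transition. -/
def ProdE {V E Q S : Type} (G : GraphDB V E S) (A : NFAx Q S) : Type :=
  {p : E × Q × S × Q // p.2 ∈ A.δ ∧ G.lab p.1 = p.2.2.1}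

/-- The product graph `G×` of a graph database `G` and an NFA `A`. -/
def ProdGraph {V E Q S : Type} (G : GraphDB V E S) (A : NFAx Q S) :
    GraphDB (V × Q) (ProdE G A) S where
  src p := (G.src p.1.1, p.1.2.1)
  tgt p := (G.tgt p.1.1, p.1.2.2.2)
  lab p := G.lab p.1.1

/-- Projection of a product-graph edge to the underlying `G`-edge. -/
def projE {V E Q S : Type} {G : GraphDB V E S} {A : NFAx Q S} (p : ProdE G A) : E := p.1.1

/-- `A.RunStates q w qs qf`: `qs` is the full state sequence of a run on `w` from `q` to `qf`. -/
inductive NFAx.RunStates {Q S : Type} (A : NFAx Q S) : Q → List S → List Q → Q → Prop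
  | nil (q : Q) : A.RunStates q [] [q] q
  | cons {q q' qf : Q} {a : S} {w : List S} {qs : List Q} :
      (q, a, q') ∈ A.δ → A.RunStates q' w qs qf → A.RunStates q (a :: w) (q :: qs) qf

/-- `A` is unambiguous: every accepted word has exactly one accepting run (state sequence). -/
def NFAx.Unambiguous {Q S : Type} (A : NFAx Q S) : Prop :=
  ∀ (w : List S) (qs₁ qs₂ : List Q) (q₁ q₂ : Q), q₁ ∈ A.F → q₂ ∈ A.F →
    A.RunStates A.q0 w qs₁ q₁ → A.RunStates A.q0 w qs₂ q₂ → qs₁ = qs₂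

/-- `getAllPaths`: backtracking enumeration of all paths (as edge lists) from `s` to a node,
following the predecessor lists, with fuel. -/
def allPaths {V E : Type} [DecidableEq V] (prevList : V → List (V × E)) (s : V) :
    ℕ → V → List (List E)
  | 0, _ => []
  | fuel + 1, u =>
      if u = s then [[]]
      else ((prevList u).map
        (fun p => (allPaths prevList s fuel p.1).map (fun es => es ++ [p.2]))).flatten

namespace ASaux

variable {W E S : Type} (H : GraphDB W E S)

def endp : W → List E → W
  | v, [] => v
  | _, e :: es => endp (H.tgt e) es

lemma isWalk_append {v u w : W} {es1 es2 : List E} (h1 : H.IsWalk v es1 u)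
    (h2 : H.IsWalk u es2 w) : H.IsWalk v (es1 ++ es2) w := by
  induction es1 generalizing v with
  | nil => cases h1; simpa using h2
  | cons e es ih => exact ⟨h1.1, ih h1.2⟩

lemma isWalk_split {v w : W} {es1 es2 : List E} (h : H.IsWalk v (es1 ++ es2) w) :
    ∃ u, H.IsWalk v es1 u ∧ H.IsWalk u es2 w := by
  induction es1 generalizing v with
  | nil => exact ⟨v, rfl, h⟩
  | cons e es ih =>
    obtain ⟨u, h1, h2⟩ := ih h.2
    exact ⟨u, ⟨h.1, h1⟩, h2⟩

lemma endp_eq {v w : W} {es : List E} (h : H.IsWalk v es w) : w = endp H v es := by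
  induction es generalizing v with
  | nil => exact h.symm
  | cons e es ih => exact ih h.2

lemma isWalk_concat {v w : W} {es : List E} {e : E} :
    H.IsWalk v (es ++ [e]) w ↔ H.IsWalk v es (H.src e) ∧ H.tgt e = w := by
  constructor
  · intro h
    obtain ⟨u, h1, h2, h3⟩ := isWalk_split H h
    cases h3
    exact ⟨h2 ▸ h1, rfl⟩
  · rintro ⟨h1, h2⟩
    exact isWalk_append H h1 ⟨rfl, h2⟩

lemma short_walk [Fintype W] {v w : W} {es : List E} (h : H.IsWalk v es w) :
    ∃ es' : List E, H.IsWalk v es' w ∧ es'.length + 1 ≤ Fintype.card W := by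
  by_cases hlen : es.length + 1 ≤ Fintype.card W
  · exact ⟨es, h, hlen⟩
  · push_neg at hlen
    -- pigeonhole: two equal intermediate endpoints
    have hcard : Fintype.card W < Fintype.card (Fin (es.length + 1)) := by
      simpa using hlen
    obtain ⟨i, j, hij, hfe⟩ := Fintype.exists_ne_map_eq_of_card_lt
      (fun i : Fin (es.length + 1) => endp H v (es.take i.1)) hcard
    have hne : i.1 ≠ j.1 := fun hh => hij (Fin.ext hh)
    have key : ∀ a b : ℕ, a < b → b ≤ es.length →
        endp H v (es.take a) = endp H v (es.take b) →
        ∃ es' : List E, H.IsWalk v es' w ∧ es'.length + 1 ≤ Fintype.card W := by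
      intro a b hlt hble hfeq
      have hsplitj : ∃ u, H.IsWalk v (es.take b) u ∧ H.IsWalk u (es.drop b) w := by
        have := isWalk_split H (v := v) (w := w) (es1 := es.take b) (es2 := es.drop b)
        rw [List.take_append_drop] at this
        exact this h
      obtain ⟨u, hu1, hu2⟩ := hsplitj
      have huj : u = endp H v (es.take b) := endp_eq H hu1
      have htakei : es.take a = (es.take b).take a := by
        rw [List.take_take, min_eq_left hlt.le]
      have hspliti : ∃ u', H.IsWalk v ((es.take b).take a) u' ∧
          H.IsWalk u' ((es.take b).drop a) u := by
        have := isWalk_split H (v := v) (w := u) (es1 := (es.take b).take a)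
          (es2 := (es.take b).drop a)
        rw [List.take_append_drop] at this
        exact this hu1
      obtain ⟨u', hu'1, _⟩ := hspliti
      have hui : u' = endp H v (es.take a) := by
        rw [htakei]; exact endp_eq H hu'1
      have huu : u' = u := by rw [hui, huj, hfeq]
      have hwalk' : H.IsWalk v (es.take a ++ es.drop b) w := by
        rw [htakei]
        exact isWalk_append H hu'1 (huu ▸ hu2)
      have hshorter : (es.take a ++ es.drop b).length < es.length := by
        simp only [List.length_append, List.length_take, List.length_drop]
        omega
      exact short_walk hwalk'
    rcases Nat.lt_or_ge i.1 j.1 with hlt | hge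
    · exact key i.1 j.1 hlt (by omega) hfe
    · exact key j.1 i.1 (by omega) (by omega) hfe.symm
termination_by es.length
decreasing_by · simpa using hshorter

end ASaux

namespace ASaux2
open ASaux

variable {W E S : Type} (H : GraphDB W E S)

lemma dist_le {v w : W} {es : List E} (h : H.IsWalk v es w) :
    H.dist v w ≤ (es.length : ℕ∞) :=
  sInf_le ⟨es, h, rfl⟩

lemma dist_spec {v w : W} (h : ∃ es : List E, H.IsWalk v es w) :
    ∃ es : List E, H.IsWalk v es w ∧ (es.length : ℕ∞) = H.dist v w := by
  obtain ⟨es0, hes0⟩ := h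
  have hTne : {n : ℕ | ∃ es : List E, H.IsWalk v es w ∧ es.length = n}.Nonempty :=
    ⟨es0.length, es0, hes0, rfl⟩
  have hmem := Nat.sInf_mem hTne
  simp only [Set.mem_setOf_eq] at hmem
  obtain ⟨es, hes, hlen⟩ := hmem
  refine ⟨es, hes, ?_⟩
  apply le_antisymm
  · apply le_sInf
    rintro n ⟨es', hes', rfl⟩
    have h1 : sInf {n : ℕ | ∃ es : List E, H.IsWalk v es w ∧ es.length = n} ≤ es'.length :=
      Nat.sInf_le ⟨es', hes', rfl⟩
    exact_mod_cast hlen ▸ Nat.cast_le.mpr h1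
  · exact sInf_le ⟨es, hes, rfl⟩

lemma reach_of_dist_ne_top {v w : W} (h : H.dist v w ≠ ⊤) :
    ∃ es : List E, H.IsWalk v es w := by
  by_contra hc
  push_neg at hc
  apply h
  have he : {n : ℕ∞ | ∃ es : List E, H.IsWalk v es w ∧ (es.length : ℕ∞) = n} = ∅ := by
    ext n; simp only [Set.mem_setOf_eq, Set.mem_empty_iff_false, iff_false, not_exists]
    exact fun es hes => absurd hes.1 (hc es)
  rw [GraphDB.dist, he, sInf_empty]

lemma dist_self (v : W) : H.dist v v = 0 := by
  apply le_antisymm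
  · exact dist_le H (show H.IsWalk v [] v from rfl)
  · exact zero_le

lemma allPaths_correct [DecidableEq W] (s : W)
    (prevList : W → List (W × E))
    (hinv : ∀ x : W, x ≠ s → ∀ p : W × E, p ∈ prevList x ↔
      (H.src p.2 = p.1 ∧ H.tgt p.2 = x ∧ H.dist s p.1 + 1 = H.dist s x))
    (hnd : ∀ x : W, (prevList x).Nodup) :
    ∀ (fuel : ℕ) (u : W) (d : ℕ), H.dist s u = (d : ℕ∞) → d < fuel →
      (allPaths prevList s fuel u).Nodup ∧
      ∀ es : List E, es ∈ allPaths prevList s fuel u ↔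
        (H.IsWalk s es u ∧ es.length = d) := by
  intro fuel
  induction fuel with
  | zero => intro u d _ h; omega
  | succ fuel ih =>
    intro u d hd hdf
    by_cases hu : u = s
    · rw [allPaths, if_pos hu]
      rw [hu] at hd
      have h0 : d = 0 := by
        have h2 := dist_self H s
        rw [hd] at h2
        exact_mod_cast h2
      subst h0
      refine ⟨List.nodup_singleton _, fun es => ?_⟩
      simp only [List.mem_singleton, hu]
      constructor
      · rintro rfl; exact ⟨rfl, rfl⟩
      · rintro ⟨_, hlen⟩; exact List.eq_nil_of_length_eq_zero hlen
    · rw [allPaths, if_neg hu]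
      have hd1 : 1 ≤ d := by
        rcases Nat.eq_zero_or_pos d with h0 | h1
        · exfalso
          subst h0
          have hreach : ∃ es : List E, H.IsWalk s es u :=
            reach_of_dist_ne_top H (by rw [hd]; simp)
          obtain ⟨es, hes, hlen⟩ := dist_spec H hreach
          rw [hd] at hlen
          have hz : es.length = 0 := by exact_mod_cast hlen
          rw [List.eq_nil_of_length_eq_zero hz] at hes
          exact hu hes.symm
        · exact h1
      obtain ⟨d', rfl⟩ : ∃ d', d = d' + 1 := ⟨d - 1, by omega⟩
      have hprev : ∀ p : W × E, p ∈ prevList u →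
          H.src p.2 = p.1 ∧ H.tgt p.2 = u ∧ H.dist s p.1 = (d' : ℕ∞) := by
        intro p hp
        obtain ⟨h1, h2, h3⟩ := (hinv u hu p).mp hp
        refine ⟨h1, h2, ?_⟩
        rw [hd] at h3
        have h4 : H.dist s p.1 + 1 = (d' : ℕ∞) + 1 := by
          rw [h3]; push_cast; ring
        exact WithTop.add_right_cancel (show (1 : ℕ∞) ≠ ⊤ from ENat.one_ne_top) h4
      constructor
      · rw [List.nodup_flatten]
        constructor
        · intro l hl
          simp only [List.mem_map] at hl
          obtain ⟨p, hp, rfl⟩ := hl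
          obtain ⟨_, _, hdp⟩ := hprev p hp
          exact ((ih p.1 d' hdp (by omega)).1).map
            (fun a b hab => by simpa using hab)
        · rw [List.pairwise_map]
          refine List.Pairwise.imp_of_mem ?_ (hnd u)
          intro p q hp hq hpq
          intro es hes1 hes2
          simp only [List.mem_map] at hes1 hes2
          obtain ⟨es1, _, rfl⟩ := hes1
          obtain ⟨es2, _, h12⟩ := hes2
          have hlast : q.2 = p.2 := by
            have hgl := congrArg List.getLast? h12
            simpa using hgl
          obtain ⟨hs1, _, _⟩ := hprev p hp
          obtain ⟨hs2, _, _⟩ := hprev q hq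
          apply hpq
          have h1 : p.1 = q.1 := by rw [← hs1, ← hs2, hlast]
          exact Prod.ext h1 hlast.symm
      · intro es
        simp only [List.mem_flatten, List.mem_map]
        constructor
        · rintro ⟨l, ⟨p, hp, rfl⟩, hes⟩
          simp only [List.mem_map] at hes
          obtain ⟨es', hes', rfl⟩ := hes
          obtain ⟨hsrc, htgt, hdp⟩ := hprev p hp
          obtain ⟨hw, hlen⟩ := ((ih p.1 d' hdp (by omega)).2 es').mp hes'
          refine ⟨(isWalk_concat H).mpr ⟨hsrc ▸ hw, htgt⟩, by simp [hlen]⟩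
        · rintro ⟨hw, hlen⟩
          rcases es.eq_nil_or_concat' with rfl | ⟨es', e, rfl⟩
          · simp at hlen
          · obtain ⟨hw', htgt⟩ := (isWalk_concat H).mp hw
            have hlen' : es'.length = d' := by
              simp only [List.length_append, List.length_singleton] at hlen
              omega
            have hle : H.dist s (H.src e) ≤ (d' : ℕ∞) := by
              have h5 := dist_le H hw'
              rw [hlen'] at h5; exact h5
            have hge : (d' : ℕ∞) ≤ H.dist s (H.src e) := by
              by_contra hcon
              push_neg at hcon
              have hnt : H.dist s (H.src e) ≠ ⊤ := (hcon.trans (by simp)).ne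
              obtain ⟨es'', hw'', hlen''⟩ := dist_spec H (reach_of_dist_ne_top H hnt)
              have hlt : es''.length < d' := by
                rw [← hlen''] at hcon
                exact_mod_cast hcon
              have h6 := dist_le H ((isWalk_concat H).mpr ⟨hw'', htgt⟩)
              rw [hd] at h6
              simp only [List.length_append, List.length_singleton] at h6
              have h7 : d' + 1 ≤ es''.length + 1 := by exact_mod_cast h6
              omega
            have hdeq : H.dist s (H.src e) = (d' : ℕ∞) := le_antisymm hle hge
            have hp : (H.src e, e) ∈ prevList u := by
              refine (hinv u hu _).mpr ⟨rfl, htgt, ?_⟩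
              rw [hdeq, hd]; push_cast; ring
            refine ⟨_, ⟨(H.src e, e), hp, rfl⟩, ?_⟩
            simp only [List.mem_map]
            exact ⟨es', ((ih (H.src e) d' hdeq (by omega)).2 es').mpr ⟨hw', hlen'⟩, rfl⟩

end ASaux2


namespace ASprod

variable {V E Q S : Type} (G : GraphDB V E S) (A : NFAx Q S)

lemma run_nil_inv {q q' : Q} (h : A.Run q [] q') : q = q' := by cases h; rfl

lemma run_of_runStates {q q' : Q} {w : List S} {qs : List Q}
    (h : A.RunStates q w qs q') : A.Run q w q' := by
  induction h with
  | nil q => exact NFAx.Run.nil q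
  | cons hδ _ ih => exact NFAx.Run.cons hδ ih

def tgtSt : List (ProdE G A) → List Q := List.map (fun p => p.1.2.2.2)

lemma prod_proj {v v' : V} {q q' : Q} {pes : List (ProdE G A)}
    (h : (ProdGraph G A).IsWalk (v, q) pes (v', q')) :
    G.IsWalk v (pes.map projE) v' ∧
    A.RunStates q ((pes.map projE).map G.lab) (q :: tgtSt G A pes) q' := by
  induction pes generalizing v q with
  | nil =>
    have h' : (v, q) = (v', q') := h
    simp only [Prod.mk.injEq] at h'
    obtain ⟨rfl, rfl⟩ := h'
    exact ⟨rfl, NFAx.RunStates.nil q⟩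
  | cons p pes ih =>
    obtain ⟨hsrc, hrest⟩ := h
    have hsv : G.src p.1.1 = v := congrArg Prod.fst hsrc
    have hsq : p.1.2.1 = q := congrArg Prod.snd hsrc
    obtain ⟨ihw, ihr⟩ := ih hrest
    refine ⟨⟨hsv, ihw⟩, ?_⟩
    have hδ : (q, G.lab p.1.1, p.1.2.2.2) ∈ A.δ := by
      rw [p.2.2, ← hsq]
      exact p.2.1
    exact NFAx.RunStates.cons hδ ihr

lemma prod_lift {v v' : V} {q q' : Q} {es : List E}
    (hw : G.IsWalk v es v') (hr : A.Run q (es.map G.lab) q') :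
    ∃ pes : List (ProdE G A),
      (ProdGraph G A).IsWalk (v, q) pes (v', q') ∧ pes.map projE = es := by
  induction es generalizing v q with
  | nil =>
    have hq : q = q' := run_nil_inv A hr
    have hv : v = v' := hw
    subst hq; subst hv
    exact ⟨[], rfl, rfl⟩
  | cons e es ih =>
    obtain ⟨hsrc, hrest⟩ := hw
    cases hr with
    | @cons _ qmid _ _ _ hδ hr' =>
      obtain ⟨pes, hpw, hproj⟩ := ih hrest hr'
      refine ⟨⟨(e, q, G.lab e, qmid), hδ, rfl⟩ :: pes, ⟨?_, hpw⟩, ?_⟩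
      · exact Prod.ext hsrc rfl
      · exact congrArg (List.cons e) hproj

lemma proj_inj {v : V} {q : Q} {x₁ x₂ : V × Q} {pes₁ pes₂ : List (ProdE G A)}
    (h1 : (ProdGraph G A).IsWalk (v, q) pes₁ x₁)
    (h2 : (ProdGraph G A).IsWalk (v, q) pes₂ x₂)
    (hp : pes₁.map projE = pes₂.map projE)
    (hs : tgtSt G A pes₁ = tgtSt G A pes₂) : pes₁ = pes₂ := by
  induction pes₁ generalizing pes₂ v q with
  | nil =>
    cases pes₂ with
    | nil => rfl
    | cons p' pes' => simp at hp
  | cons p pes ih =>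
    cases pes₂ with
    | nil => simp at hp
    | cons p' pes' =>
      simp only [List.map_cons, List.cons.injEq, tgtSt] at hp hs
      obtain ⟨hpe, hpt⟩ := hp
      obtain ⟨hse, hst⟩ := hs
      obtain ⟨hsrc1, hrest1⟩ := h1
      obtain ⟨hsrc2, hrest2⟩ := h2
      have hq1 : p.1.2.1 = q := congrArg Prod.snd hsrc1
      have hq2 : p'.1.2.1 = q := congrArg Prod.snd hsrc2
      have he : p.1.1 = p'.1.1 := hpe
      have ha : p.1.2.2.1 = p'.1.2.2.1 := by
        rw [← p.2.2, ← p'.2.2, he]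
      have hpp : p = p' := by
        apply Subtype.ext
        exact Prod.ext he (Prod.ext (hq1.trans hq2.symm) (Prod.ext ha hse))
      subst hpp
      have htl : pes = pes' := ih hrest1 hrest2 hpt (by simpa [tgtSt] using hst)
      rw [htl]

end ASprod

/-- for `A` unambiguous with single final state `q_F`, after BFS with
predecessor lists on `G×` from `(v,q₀)`, the paths enumerated by `getAllPaths` at `(v',q_F)`,
projected to `G`, are exactly the shortest paths from `v` to `v'` among paths with label in
`L(A)`, each occurring once. -/
theorem allShortest_correct {V E Q S : Type} [DecidableEq V] [DecidableEq Q]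
    [Fintype V] [Fintype Q] (G : GraphDB V E S) (A : NFAx Q S) (qF : Q)
    (hF : A.F = {qF}) (hU : A.Unambiguous) (v v' : V)
    (prevList : V × Q → List ((V × Q) × ProdE G A))
    (hinv : ∀ x : V × Q, x ≠ (v, A.q0) → ∀ p : (V × Q) × ProdE G A, p ∈ prevList x ↔
      ((ProdGraph G A).src p.2 = p.1 ∧ (ProdGraph G A).tgt p.2 = x ∧
        (ProdGraph G A).dist (v, A.q0) p.1 + 1 = (ProdGraph G A).dist (v, A.q0) x))
    (hnd : ∀ x : V × Q, (prevList x).Nodup)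
    (hreach : ∃ es : List (ProdE G A), (ProdGraph G A).IsWalk (v, A.q0) es (v', qF)) :
    ((allPaths prevList (v, A.q0) (Fintype.card (V × Q) + 1) (v', qF)).map
        (List.map projE)).Nodup ∧
    ∀ p : List E,
      p ∈ (allPaths prevList (v, A.q0) (Fintype.card (V × Q) + 1) (v', qF)).map
        (List.map projE) ↔
      (G.IsWalk v p v' ∧ p.map G.lab ∈ A.Lang ∧
        (p.length : ℕ∞) = sInf {m : ℕ∞ | ∃ es : List E, G.IsWalk v es v' ∧
          es.map G.lab ∈ A.Lang ∧ (es.length : ℕ∞) = m}) := by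
  classical
  set H := ProdGraph G A with hH
  set s : V × Q := (v, A.q0) with hs
  have hsets : {n : ℕ∞ | ∃ pes : List (ProdE G A),
        H.IsWalk s pes (v', qF) ∧ (pes.length : ℕ∞) = n}
      = {m : ℕ∞ | ∃ es : List E, G.IsWalk v es v' ∧
          es.map G.lab ∈ A.Lang ∧ (es.length : ℕ∞) = m} := by
    ext n
    simp only [Set.mem_setOf_eq]
    constructor
    · rintro ⟨pes, hw, rfl⟩
      obtain ⟨hgw, hrs⟩ := ASprod.prod_proj G A hw
      refine ⟨pes.map projE, hgw,
        ⟨qF, by rw [hF]; exact Set.mem_singleton _, ASprod.run_of_runStates A hrs⟩, by simp⟩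
    · rintro ⟨es, hgw, ⟨qf, hqf, hrun⟩, rfl⟩
      rw [hF] at hqf
      obtain rfl : qf = qF := Set.mem_singleton_iff.mp hqf
      obtain ⟨pes, hpw, hproj⟩ := ASprod.prod_lift G A hgw hrun
      exact ⟨pes, hpw, by rw [← hproj]; simp⟩
  have hdeq : H.dist s (v', qF) = sInf {m : ℕ∞ | ∃ es : List E, G.IsWalk v es v' ∧
      es.map G.lab ∈ A.Lang ∧ (es.length : ℕ∞) = m} := by
    rw [GraphDB.dist, hsets]
  obtain ⟨pes0, hpes0, hlen0⟩ := ASaux2.dist_spec H hreach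
  set d := pes0.length with hdd
  have hd : H.dist s (v', qF) = (d : ℕ∞) := hlen0.symm
  have hdlt : d < Fintype.card (V × Q) + 1 := by
    obtain ⟨pes1, hpes1, hcard⟩ := ASaux.short_walk H hpes0
    have hle := ASaux2.dist_le H hpes1
    rw [hd] at hle
    have : d ≤ pes1.length := by exact_mod_cast hle
    omega
  obtain ⟨hnodup, hmem⟩ := ASaux2.allPaths_correct H s prevList hinv hnd
    (Fintype.card (V × Q) + 1) (v', qF) d hd hdlt
  have hqFmem : qF ∈ A.F := by rw [hF]; exact Set.mem_singleton _
  constructor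
  · apply List.Nodup.map_on ?_ hnodup
    intro a ha b hb hab
    obtain ⟨hwa, _⟩ := (hmem a).mp ha
    obtain ⟨hwb, _⟩ := (hmem b).mp hb
    obtain ⟨_, hrsa⟩ := ASprod.prod_proj G A hwa
    obtain ⟨_, hrsb⟩ := ASprod.prod_proj G A hwb
    have hwrd : (b.map projE).map G.lab = (a.map projE).map G.lab := by rw [hab]
    rw [hwrd] at hrsb
    have hqs := hU _ _ _ qF qF hqFmem hqFmem hrsa hrsb
    have htl : ASprod.tgtSt G A a = ASprod.tgtSt G A b := by
      have := congrArg List.tail hqs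
      simpa using this
    exact ASprod.proj_inj G A hwa hwb hab htl
  · intro p
    rw [List.mem_map]
    constructor
    · rintro ⟨pes, hpes, rfl⟩
      obtain ⟨hw, hlen⟩ := (hmem pes).mp hpes
      obtain ⟨hgw, hrs⟩ := ASprod.prod_proj G A hw
      refine ⟨hgw, ⟨qF, hqFmem, ASprod.run_of_runStates A hrs⟩, ?_⟩
      rw [← hdeq, hd]
      simp [hlen]
    · rintro ⟨hgw, hlang, hlen⟩
      obtain ⟨qf, hqf, hrun⟩ := hlang
      rw [hF] at hqf
      obtain rfl : qf = qF := Set.mem_singleton_iff.mp hqf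
      obtain ⟨pes, hpw, hproj⟩ := ASprod.prod_lift G A hgw hrun
      refine ⟨pes, (hmem pes).mpr ⟨hpw, ?_⟩, hproj⟩
      rw [← hdeq, hd] at hlen
      have hpl : p.length = d := by exact_mod_cast hlen
      rw [← hpl, ← hproj]
      simp
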